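/- arXiv:0707.2241 — 3 statements merged into one kernel-verified Lean document; each statement's English description precedes it below -/
import Mathlib

section
/- Under the hypotheses of the quasi-homogeneous Laurent series ansatz, the first-order coefficients c^{(1)} = (c_1^{(1)},…,c_n^{(1)}) satisfy (𝓛 − I) c^{(1)} = 0, where 𝓛 is the matrix with entries ∂f_i/∂w_j(c^{(0)}) + δ_{ij} s_i. In particular c^{(1)} lies in the eigenspace of 𝓛 for eigenvalue 1. -/
open Filter FormalMultilinearSeries in
/-- for a formal Laurent solution of the quasi-homogeneous system, the
first-order coefficients satisfy `(𝓛 - I) c^{(1)} = 0`, where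
`𝓛_{ij} = ∂f_i/∂w_j (c^{(0)}) + δ_{ij} s_i`; i.e. `c^{(1)}` is in the eigenspace of `𝓛`
for the eigenvalue `1`. -/
theorem first_order_coefficients_eigenvector (n : ℕ) (s : Fin n → ℕ) (hs : ∀ j, 0 < s j)
    (f : Fin n → (Fin n → ℂ) → ℂ) (hfpoly : ∀ i, ∃ p : MvPolynomial (Fin n) ℂ,
      ∀ w, f i w = MvPolynomial.eval w p)
    (hquasi : ∀ i, ∀ α : ℂ, α ≠ 0 → ∀ w : Fin n → ℂ,
      f i (fun j => α ^ (s j) * w j) = α ^ (s i + 1) * f i w)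
    (c : ℕ → Fin n → ℂ) (hc0 : c 0 ≠ 0)
    (hind : ∀ i, (s i : ℂ) * c 0 i + f i (c 0) = 0)
    (w : ℂ → Fin n → ℂ) (r : ℝ) (hr : 0 < r)
    (hsum : ∀ i, ∀ z : ℂ, z ≠ 0 → ‖z‖ < r →
      HasSum (fun k : ℕ => c k i * z ^ k) (z ^ (s i : ℕ) * w z i))
    (hode : ∀ i, ∀ z : ℂ, z ≠ 0 → ‖z‖ < r →
      HasDerivAt (fun z => w z i) (f i (w z)) z)
    (L : Matrix (Fin n) (Fin n) ℂ)
    (hL : ∀ i j, L i j = fderiv ℂ (f i) (c 0) (Pi.single j 1) +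
      if i = j then (s i : ℂ) else 0) :
    Matrix.mulVec (L - 1) (c 1) = 0 ∧ Matrix.mulVec L (c 1) = c 1 := by
  -- f i is analytic everywhere
  have hfan : ∀ i, ∀ x : Fin n → ℂ, AnalyticAt ℂ (f i) x := by
    intro i x
    obtain ⟨p, hp⟩ := hfpoly i
    have : f i = fun w => MvPolynomial.aeval w p := by
      funext w; rw [hp w, ← MvPolynomial.coe_aeval_eq_eval]; rfl
    rw [this]
    exact AnalyticAt.aeval_mvPolynomial
      (fun j => (ContinuousLinearMap.proj (R := ℂ) (φ := fun _ : Fin n => ℂ) j).analyticAt x) p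
  -- set up the power series
  have hρ : (0:ℝ) < r/2 := by linarith
  set ρ : NNReal := ⟨r/2, hρ.le⟩ with hρdef
  set p : Fin n → FormalMultilinearSeries ℂ ℂ ℂ :=
    fun i => FormalMultilinearSeries.ofScalars ℂ (fun k => c k i) with hpdef
  have hznorm : ‖((r/2 : ℝ) : ℂ)‖ = r/2 := by
    rw [Complex.norm_real, Real.norm_of_nonneg hρ.le]
  have hzne : ((r/2 : ℝ) : ℂ) ≠ 0 := by
    simp only [ne_eq, Complex.ofReal_eq_zero]; linarith
  have hrad : ∀ i, (ρ : ENNReal) ≤ (p i).radius := by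
    intro i
    apply FormalMultilinearSeries.le_radius_of_summable_norm
    have := (hsum i ((r/2 : ℝ) : ℂ) hzne (by rw [hznorm]; linarith)).summable
    have hn := this.norm
    convert hn using 2 with k
    rw [ofScalars_norm ℂ (fun k => c k i) k, norm_mul, norm_pow, hznorm]
    rfl
  have hradpos : ∀ i, 0 < (p i).radius := by
    intro i
    refine lt_of_lt_of_le ?_ (hrad i)
    exact_mod_cast (show (0:NNReal) < ρ from hρ)
  set g : Fin n → ℂ → ℂ := fun i => (p i).sum with hgdef
  have hgball : ∀ i, HasFPowerSeriesOnBall (g i) (p i) 0 (p i).radius :=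
    fun i => (p i).hasFPowerSeriesOnBall (hradpos i)
  have hgan : ∀ i, ∀ x, ‖x‖ < r/2 → AnalyticAt ℂ (g i) x := by
    intro i x hx
    refine (hgball i).analyticOnNhd x ?_
    rw [EMetric.mem_ball, edist_zero_right]
    calc (‖x‖₊ : ENNReal) < (ρ : ENNReal) := by
          exact_mod_cast (show ‖x‖₊ < ρ from hx)
      _ ≤ _ := hrad i
  -- g i z = z^(s i) * w z i on the punctured ball
  have hgw : ∀ i, ∀ z : ℂ, z ≠ 0 → ‖z‖ < r/2 → g i z = z ^ (s i) * w z i := by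
    intro i z hz hz'
    have hmem : z ∈ Metric.eball (0:ℂ) (p i).radius := by
      rw [EMetric.mem_ball, edist_zero_right]
      calc (‖z‖₊ : ENNReal) < (ρ : ENNReal) := by exact_mod_cast (show ‖z‖₊ < ρ from hz')
        _ ≤ _ := hrad i
    have h1 : HasSum (fun k : ℕ => (p i) k fun _ => z) (g i z) := (p i).hasSum hmem
    have h2 : HasSum (fun k : ℕ => c k i * z ^ k) (g i z) := by
      convert h1 using 2 with k
      rw [ofScalars_apply_eq]; simp [smul_eq_mul]
    exact h2.unique (hsum i z hz (by linarith))
  -- values and derivatives of g at 0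
  have hg0 : ∀ i, g i 0 = c 0 i := by
    intro i
    have h := (hgball i).coeff_zero (fun _ => 0)
    rw [← h]
    simp [hpdef, FormalMultilinearSeries.ofScalars]
  have hgd0 : ∀ i, deriv (g i) 0 = c 1 i := by
    intro i
    rw [(hgball i).hasFPowerSeriesAt.deriv]
    simp [hpdef, FormalMultilinearSeries.ofScalars]
  -- derivative of g on the punctured ball
  have hgderiv : ∀ i, ∀ z : ℂ, z ≠ 0 → ‖z‖ < r/2 →
      HasDerivAt (g i) ((s i : ℂ) * z ^ (s i - 1) * w z i + z ^ (s i) * f i (w z)) z := by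
    intro i z hz hz'
    have hopen : IsOpen {x : ℂ | x ≠ 0 ∧ ‖x‖ < r/2} := by
      have : {x : ℂ | x ≠ 0 ∧ ‖x‖ < r/2} = {0}ᶜ ∩ Metric.ball 0 (r/2) := by
        ext x; simp [Metric.mem_ball, dist_zero_right]
      rw [this]
      exact (isOpen_compl_singleton).inter Metric.isOpen_ball
    have hmem : z ∈ {x : ℂ | x ≠ 0 ∧ ‖x‖ < r/2} := ⟨hz, hz'⟩
    have heq : (fun x => x ^ (s i) * w x i) =ᶠ[nhds z] g i := by
      filter_upwards [hopen.mem_nhds hmem] with x hx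
      exact (hgw i x hx.1 hx.2).symm
    have hD : HasDerivAt (fun x => x ^ (s i) * w x i)
        ((s i : ℂ) * z ^ (s i - 1) * w z i + z ^ (s i) * f i (w z)) z := by
      simpa [Pi.mul_def] using (hasDerivAt_pow (s i) z).mul (hode i z hz (by linarith))
    exact hD.congr_of_eventuallyEq heq.symm
  -- the two analytic functions
  set F1 : Fin n → ℂ → ℂ := fun i z => z * deriv (g i) z with hF1def
  set F2 : Fin n → ℂ → ℂ := fun i z => (s i : ℂ) * g i z + f i (fun j => g j z) with hF2def
  -- they agree on the punctured ball
  have hF12 : ∀ i, ∀ z : ℂ, z ≠ 0 → ‖z‖ < r/2 → F1 i z = F2 i z := by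
    intro i z hz hz'
    have hd := (hgderiv i z hz hz').deriv
    have hq : f i (fun j => g j z) = z ^ (s i + 1) * f i (w z) := by
      have : (fun j => g j z) = (fun j => z ^ (s j) * w z j) := by
        funext j; exact hgw j z hz hz'
      rw [this, hquasi i z hz (w z)]
    obtain ⟨m, hm⟩ : ∃ m, s i = m + 1 := ⟨s i - 1, (Nat.succ_pred_eq_of_pos (hs i)).symm⟩
    have hpow : z ^ (s i) = z * z ^ (s i - 1) := by
      rw [hm]; simp only [Nat.add_sub_cancel, pow_succ]; ring
    simp only [hF1def, hF2def, hd, hq, hgw i z hz hz']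
    rw [pow_succ, hpow]
    ring
  -- continuity at 0
  have hderivan : ∀ i, AnalyticAt ℂ (deriv (g i)) 0 := by
    intro i
    have : AnalyticOnNhd ℂ (g i) (Metric.eball 0 (p i).radius) := (hgball i).analyticOnNhd
    refine this.deriv 0 ?_
    rw [EMetric.mem_ball, edist_zero_right]
    simpa using hradpos i
  have hgan0 : ∀ i, AnalyticAt ℂ (g i) 0 := fun i => hgan i 0 (by simpa using hρ)
  have hF1c : ∀ i, ContinuousAt (F1 i) 0 :=
    fun i => (continuous_id.continuousAt).mul (hderivan i).continuousAt
  have hcompan : ∀ i, AnalyticAt ℂ (fun z => f i (fun j => g j z)) 0 := by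
    intro i
    have h0 : (fun j => g j 0) = c 0 := by funext j; exact hg0 j
    have hgpi : AnalyticAt ℂ (fun z => (fun j => g j z)) 0 :=
      AnalyticAt.pi (fun j => hgan0 j)
    have hfc : AnalyticAt ℂ (f i) ((fun j => g j 0)) := by rw [h0]; exact hfan i (c 0)
    exact hfc.comp hgpi
  have hF2c : ∀ i, ContinuousAt (F2 i) 0 := by
    intro i
    exact (continuousAt_const.mul (hgan0 i).continuousAt).add (hcompan i).continuousAt
  -- equality at 0 via limits
  have hFeq : ∀ i, F1 i =ᶠ[nhds 0] F2 i := by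
    intro i
    have hpunct : F1 i =ᶠ[nhdsWithin 0 {(0:ℂ)}ᶜ] F2 i := by
      have hmem : {x : ℂ | x ≠ 0 ∧ ‖x‖ < r/2} ∈ nhdsWithin (0:ℂ) {(0:ℂ)}ᶜ := by
        rw [mem_nhdsWithin]
        exact ⟨Metric.ball 0 (r/2), Metric.isOpen_ball, by simpa [Metric.mem_ball] using hρ,
          fun x hx => ⟨hx.2, by simpa [Metric.mem_ball, dist_zero_right] using hx.1⟩⟩
      filter_upwards [hmem] with x hx
      exact hF12 i x hx.1 hx.2
    have hval : F1 i 0 = F2 i 0 := by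
      have h1 : Tendsto (F1 i) (nhdsWithin 0 {(0:ℂ)}ᶜ) (nhds (F1 i 0)) :=
        (hF1c i).continuousWithinAt.tendsto
      have h2 : Tendsto (F1 i) (nhdsWithin 0 {(0:ℂ)}ᶜ) (nhds (F2 i 0)) :=
        ((hF2c i).continuousWithinAt.tendsto).congr' hpunct.symm
      exact tendsto_nhds_unique h1 h2
    rw [← nhdsNE_sup_pure (0:ℂ)]
    rw [Filter.EventuallyEq, Filter.eventually_sup]
    exact ⟨hpunct, by simpa using hval⟩
  -- differentiate at 0
  have hkey : ∀ i, c 1 i = (s i : ℂ) * c 1 i + fderiv ℂ (f i) (c 0) (c 1) := by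
    intro i
    have hdeq : deriv (F1 i) 0 = deriv (F2 i) 0 := (hFeq i).deriv_eq
    -- derivative of F1 at 0
    have hd1 : HasDerivAt (F1 i) (c 1 i) 0 := by
      have h := (hasDerivAt_id (0:ℂ)).mul ((hderivan i).differentiableAt.hasDerivAt)
      simpa [hgd0 i, Pi.mul_def, hF1def] using h
    -- derivative of F2 at 0
    have hG : HasDerivAt (fun z => (fun j => g j z)) (fun j => c 1 j) 0 := by
      rw [hasDerivAt_pi]
      intro j
      have := (hgan0 j).differentiableAt.hasDerivAt
      rwa [hgd0 j] at this
    have h0 : (fun j => g j 0) = c 0 := by funext j; exact hg0 j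
    have hcomp : HasDerivAt (fun z => f i (fun j => g j z))
        (fderiv ℂ (f i) (c 0) (fun j => c 1 j)) 0 := by
      have hf' : HasFDerivAt (f i) (fderiv ℂ (f i) (c 0)) ((fun j => g j 0)) := by
        rw [h0]; exact (hfan i (c 0)).differentiableAt.hasFDerivAt
      exact hf'.comp_hasDerivAt 0 hG
    have hd2 : HasDerivAt (F2 i) ((s i : ℂ) * c 1 i + fderiv ℂ (f i) (c 0) (c 1)) 0 := by
      have hg' : HasDerivAt (fun z => (s i : ℂ) * g i z) ((s i : ℂ) * c 1 i) 0 := by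
        have := ((hgan0 i).differentiableAt.hasDerivAt).const_mul ((s i : ℂ))
        rwa [hgd0 i] at this
      exact hg'.add hcomp
    rw [hd1.deriv, hd2.deriv] at hdeq
    exact hdeq
  -- linear-algebra reformulation
  have hfd : ∀ i, fderiv ℂ (f i) (c 0) (c 1) =
      ∑ j, fderiv ℂ (f i) (c 0) (Pi.single j 1) * c 1 j := by
    intro i
    have hc1 : (c 1) = ∑ j, c 1 j • (Pi.single j 1 : Fin n → ℂ) := by
      funext k
      rw [Finset.sum_apply]
      simp [Pi.single_apply]
    conv_lhs => rw [hc1]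
    rw [map_sum]
    congr 1
    funext j
    rw [map_smul]
    simp [smul_eq_mul, mul_comm]
  have hmv : Matrix.mulVec L (c 1) = c 1 := by
    funext i
    have : Matrix.mulVec L (c 1) i = ∑ j, L i j * c 1 j := rfl
    rw [this]
    have : ∑ j, L i j * c 1 j =
        ∑ j, (fderiv ℂ (f i) (c 0) (Pi.single j 1) * c 1 j
          + (if i = j then (s i : ℂ) else 0) * c 1 j) := by
      apply Finset.sum_congr rfl
      intro j _
      rw [hL i j, add_mul]
    rw [this, Finset.sum_add_distrib, ← hfd i]
    have : ∑ j, (if i = j then (s i : ℂ) else 0) * c 1 j = (s i : ℂ) * c 1 i := by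
      simp [Finset.sum_ite_eq]
    rw [this]
    linear_combination -hkey i
  refine ⟨?_, hmv⟩
  rw [Matrix.sub_mulVec, Matrix.one_mulVec, hmv, sub_self]
end

section
/- The function Φ(z) = (1 + nABz − √((1 − 2nAB(1+2nBC)z + n²A²B²z²)))/(2nB(1+nBC)) satisfies the functional equation Φ(z) = Az + CB²(nΦ(z))²/(1 − BnΦ(z)) in a neighborhood of z = 0, with Φ(0) = 0. -/
/-- the explicit algebraic function `Φ` solves the majorant functional
equation near `z = 0` and vanishes at `0`. -/
theorem majorant_function_solves_equation (n : ℕ) (hn : 0 < n)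
    (A B C : ℝ) (hA : 0 < A) (hB : 0 < B) (hC : 0 < C)
    (Φ : ℝ → ℝ)
    (hΦ : ∀ z : ℝ, Φ z = (1 + n * A * B * z -
      Real.sqrt (1 - 2 * n * A * B * (1 + 2 * n * B * C) * z + n ^ 2 * A ^ 2 * B ^ 2 * z ^ 2))
        / (2 * n * B * (1 + n * B * C))) :
    Φ 0 = 0 ∧ ∀ᶠ z in nhds (0 : ℝ),
      Φ z = A * z + C * B ^ 2 * (n * Φ z) ^ 2 / (1 - B * n * Φ z) := by
  have hfun : Φ = fun z : ℝ => (1 + n * A * B * z -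
      Real.sqrt (1 - 2 * n * A * B * (1 + 2 * n * B * C) * z + n ^ 2 * A ^ 2 * B ^ 2 * z ^ 2))
        / (2 * n * B * (1 + n * B * C)) := funext hΦ
  subst hfun
  have hn' : (0:ℝ) < n := by exact_mod_cast hn
  have hK0 : (0:ℝ) < 1 + n * B * C := by positivity
  have hd0 : (2 * (n:ℝ) * B * (1 + n * B * C)) ≠ 0 := by positivity
  have hΦ0 : (fun z : ℝ => (1 + n * A * B * z -
      Real.sqrt (1 - 2 * n * A * B * (1 + 2 * n * B * C) * z + n ^ 2 * A ^ 2 * B ^ 2 * z ^ 2))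
        / (2 * n * B * (1 + n * B * C))) 0 = 0 := by
    simp [Real.sqrt_one]
  refine ⟨hΦ0, ?_⟩
  -- continuity facts
  have hcontD : Continuous (fun z : ℝ =>
      1 - 2 * n * A * B * (1 + 2 * n * B * C) * z + n ^ 2 * A ^ 2 * B ^ 2 * z ^ 2) := by
    continuity
  have hTD : Filter.Tendsto (fun z : ℝ =>
      1 - 2 * n * A * B * (1 + 2 * n * B * C) * z + n ^ 2 * A ^ 2 * B ^ 2 * z ^ 2)
      (nhds 0) (nhds 1) := by
    have := hcontD.continuousAt (x := 0)
    simpa [ContinuousAt] using this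
  have hD : ∀ᶠ z in nhds (0:ℝ),
      0 ≤ 1 - 2 * n * A * B * (1 + 2 * n * B * C) * z + n ^ 2 * A ^ 2 * B ^ 2 * z ^ 2 :=
    hTD.eventually (eventually_ge_nhds one_pos)
  have hcontΦ : Continuous (fun z : ℝ => B * n * ((1 + n * A * B * z -
      Real.sqrt (1 - 2 * n * A * B * (1 + 2 * n * B * C) * z + n ^ 2 * A ^ 2 * B ^ 2 * z ^ 2))
        / (2 * n * B * (1 + n * B * C)))) := by
    apply Continuous.mul continuous_const
    apply Continuous.div_const
    exact Continuous.sub (by continuity) (Real.continuous_sqrt.comp hcontD)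
  have hTΦ : Filter.Tendsto (fun z : ℝ => B * n * ((1 + n * A * B * z -
      Real.sqrt (1 - 2 * n * A * B * (1 + 2 * n * B * C) * z + n ^ 2 * A ^ 2 * B ^ 2 * z ^ 2))
        / (2 * n * B * (1 + n * B * C)))) (nhds 0) (nhds 0) := by
    have := hcontΦ.continuousAt (x := 0)
    simpa [ContinuousAt, Real.sqrt_one] using this
  have hsmall : ∀ᶠ z in nhds (0:ℝ), B * n * ((1 + n * A * B * z -
      Real.sqrt (1 - 2 * n * A * B * (1 + 2 * n * B * C) * z + n ^ 2 * A ^ 2 * B ^ 2 * z ^ 2))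
        / (2 * n * B * (1 + n * B * C))) < 1 :=
    hTΦ.eventually (eventually_lt_nhds one_pos)
  filter_upwards [hD, hsmall] with z hDz hsz
  set t : ℝ := (1 + n * A * B * z -
      Real.sqrt (1 - 2 * n * A * B * (1 + 2 * n * B * C) * z + n ^ 2 * A ^ 2 * B ^ 2 * z ^ 2))
        / (2 * n * B * (1 + n * B * C)) with ht
  clear_value t
  have h1 : (Real.sqrt (1 - 2 * n * A * B * (1 + 2 * n * B * C) * z
        + n ^ 2 * A ^ 2 * B ^ 2 * z ^ 2)) ^ 2
      = 1 - 2 * n * A * B * (1 + 2 * n * B * C) * z + n ^ 2 * A ^ 2 * B ^ 2 * z ^ 2 :=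
    Real.sq_sqrt hDz
  have hd2 : (2 * (n:ℝ) * B * (1 + n * B * C)) * t = 1 + n * A * B * z -
      Real.sqrt (1 - 2 * n * A * B * (1 + 2 * n * B * C) * z + n ^ 2 * A ^ 2 * B ^ 2 * z ^ 2) := by
    rw [ht]; field_simp
  have h3 : (1 + (n:ℝ) * A * B * z - (2 * n * B * (1 + n * B * C)) * t) ^ 2
      = 1 - 2 * n * A * B * (1 + 2 * n * B * C) * z + n ^ 2 * A ^ 2 * B ^ 2 * z ^ 2 := by
    rw [hd2]; linear_combination h1
  have keyScaled : (2 * (n:ℝ) * B * (1 + n * B * C)) *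
      ((1 + n * A * B * z) * t - n * B * (1 + n * B * C) * t ^ 2)
      = (2 * (n:ℝ) * B * (1 + n * B * C)) * (A * z) := by
    linear_combination (-1/2 : ℝ) * h3
  have key : (1 + (n:ℝ) * A * B * z) * t - n * B * (1 + n * B * C) * t ^ 2 = A * z :=
    mul_left_cancel₀ hd0 keyScaled
  have hne : 1 - B * (n:ℝ) * t ≠ 0 := by
    have : 0 < 1 - B * (n:ℝ) * t := by linarith [hsz]
    exact ne_of_gt this
  have h4 : C * B ^ 2 * ((n:ℝ) * t) ^ 2 = (t - A * z) * (1 - B * n * t) := by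
    linear_combination -key
  rw [eq_comm, h4, mul_div_cancel_right₀ _ hne]
  ring
end

section
/- For the Kowalewski system, the quartic function H₄ = ((m₁+im₂)²/4 − (γ₁+iγ₂)) · ((m₁−im₂)²/4 − (γ₁−iγ₂)) is a first integral: dH₄/dt = 0 along every solution. -/
open Complex in
/-- the Kowalewski quartic
`H₄ = ((m₁+im₂)²/4 − (γ₁+iγ₂))((m₁−im₂)²/4 − (γ₁−iγ₂))` is a first integral of the
Kowalewski system. -/
theorem kowalewski_quartic_integral (m1 m2 m3 g1 g2 g3 : ℝ → ℂ)
    (hm1 : ∀ t, HasDerivAt m1 (m2 t * m3 t) t)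
    (hm2 : ∀ t, HasDerivAt m2 (-(m1 t * m3 t) + 2 * g3 t) t)
    (hm3 : ∀ t, HasDerivAt m3 (-(2 * g2 t)) t)
    (hg1 : ∀ t, HasDerivAt g1 (2 * m3 t * g2 t - m2 t * g3 t) t)
    (hg2 : ∀ t, HasDerivAt g2 (m1 t * g3 t - 2 * m3 t * g1 t) t)
    (hg3 : ∀ t, HasDerivAt g3 (m2 t * g1 t - m1 t * g2 t) t) :
    ∀ t, HasDerivAt (fun t =>
      ((m1 t + I * m2 t) ^ 2 / 4 - (g1 t + I * g2 t)) *
      ((m1 t - I * m2 t) ^ 2 / 4 - (g1 t - I * g2 t))) 0 t := by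
  intro t
  have hu := (hm1 t).add ((hm2 t).const_mul I)
  have hv := (hm1 t).sub ((hm2 t).const_mul I)
  have hA := ((hu.mul hu).div_const 4).sub ((hg1 t).add ((hg2 t).const_mul I))
  have hB := ((hv.mul hv).div_const 4).sub ((hg1 t).sub ((hg2 t).const_mul I))
  simp only [pow_two]
  have h := hA.mul hB
  convert h using 1
  case e'_4 => rfl
  case e'_8 => rfl
  simp only [Pi.add_apply, Pi.sub_apply, Pi.mul_apply]
  linear_combination
    (-((4 : ℂ) * m3 t * g1 t * g2 t - 2 * m2 t * g1 t * g3 t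
      + (1/2) * m2 t ^ 3 * g3 t * I ^ 2 - m1 t * m2 t * m3 t * g1 t
      - (1/4) * m1 t * m2 t ^ 3 * m3 t * I ^ 2 - m1 t ^ 2 * m3 t * g2 t
      + (1/2) * m1 t ^ 2 * m2 t * g3 t + (1/4) * m1 t ^ 3 * m2 t * m3 t)) * Complex.I_sq
end
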